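/- The partition function of H_S in the degenerate DA model equals Tr e^{−βH_S} = e^{−βe₁} + e^{−βe₂} + (N_D−1)e^{−βE_D} + (N_A−1)e^{−βE_A}, where e₁,e₂ are the eigenvalues of [[E_D,v],[v,E_A]] with v = V√(N_D N_A). -/

import Mathlib

open Matrix
open scoped BigOperators
open scoped Nat

noncomputable section DAauxSec

/-- Structured matrix used to compute powers of the DA Hamiltonian. -/
def Smat (m n : ℕ) (a b c d e f : ℂ) : Matrix (Fin m ⊕ Fin n) (Fin m ⊕ Fin n) ℂ :=
  fun x y => match x, y with
  | .inl j, .inl j' => (if j = j' then a else 0) + c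
  | .inl _, .inr _ => d
  | .inr _, .inl _ => e
  | .inr k, .inr k' => (if k = k' then b else 0) + f

lemma Smat_one (m n : ℕ) : Smat m n 1 1 0 0 0 0 = 1 := by
  ext x y
  cases x <;> cases y <;>
    simp [Smat, Matrix.one_apply, Sum.inl.injEq, Sum.inr.injEq]

lemma Smat_mul (m n : ℕ) (a b c d e f a' b' c' d' e' f' : ℂ) :
    Smat m n a b c d e f * Smat m n a' b' c' d' e' f' =
    Smat m n (a*a') (b*b')
      (a*c' + c*a' + (m:ℂ)*(c*c') + (n:ℂ)*(d*e'))
      (a*d' + d*b' + (m:ℂ)*(c*d') + (n:ℂ)*(d*f'))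
      (b*e' + e*a' + (n:ℂ)*(f*e') + (m:ℂ)*(e*c'))
      (b*f' + f*b' + (n:ℂ)*(f*f') + (m:ℂ)*(e*d')) := by
  ext x y
  cases x <;> cases y <;>
    · simp only [Matrix.mul_apply, Fintype.sum_sum_type, Smat]
      simp [add_mul, mul_add, Finset.sum_add_distrib, ite_mul, mul_ite,
        Finset.sum_ite_eq, Finset.sum_ite_eq', Finset.mul_sum, Finset.sum_const,
        nsmul_eq_mul]
      ring

lemma Smat_trace (m n : ℕ) (a b c d e f : ℂ) :
    Matrix.trace (Smat m n a b c d e f) = (m:ℂ)*(a+c) + (n:ℂ)*(b+f) := by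
  simp [Matrix.trace, Matrix.diag, Fintype.sum_sum_type, Smat, Finset.sum_const,
    nsmul_eq_mul]
  ring

lemma Smat_pow_struct (m n : ℕ) (a b V w : ℂ) (hw : w ^ 2 = (m:ℂ) * n) (k : ℕ) :
    ∃ c d e f : ℂ, (Smat m n a b 0 V V 0) ^ k = Smat m n (a^k) (b^k) c d e f ∧
      (!![a, V*w; V*w, b]) ^ k = !![a^k + m*c, w*d; w*e, b^k + n*f] := by
  induction k with
  | zero =>
      refine ⟨0, 0, 0, 0, ?_, ?_⟩
      · simpa using (Smat_one m n).symm
      · norm_num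
        exact Matrix.one_fin_two (α := ℂ)
  | succ k ih =>
      obtain ⟨c, d, e, f, h1, h2⟩ := ih
      refine ⟨a^k*0 + c*a + (m:ℂ)*(c*0) + (n:ℂ)*(d*V),
              a^k*V + d*b + (m:ℂ)*(c*V) + (n:ℂ)*(d*0),
              b^k*V + e*a + (n:ℂ)*(f*V) + (m:ℂ)*(e*0),
              b^k*0 + f*b + (n:ℂ)*(f*0) + (m:ℂ)*(e*V), ?_, ?_⟩
      · rw [pow_succ, h1, Smat_mul, ← pow_succ, ← pow_succ]
      · rw [pow_succ, h2, Matrix.mul_fin_two]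
        ext i j
        fin_cases i <;> fin_cases j <;> simp
        · linear_combination (d*V)*hw
        · ring
        · ring
        · linear_combination (e*V)*hw

lemma Smat_trace_pow (m n : ℕ) (a b V w : ℂ) (hw : w ^ 2 = (m:ℂ) * n) (k : ℕ) :
    Matrix.trace ((Smat m n a b 0 V V 0) ^ k) =
      Matrix.trace ((!![a, V*w; V*w, b]) ^ k) + ((m:ℂ)-1)*a^k + ((n:ℂ)-1)*b^k := by
  obtain ⟨c, d, e, f, h1, h2⟩ := Smat_pow_struct m n a b V w hw k
  rw [h1, h2, Smat_trace, Matrix.trace_fin_two_of]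
  ring

lemma hasSum_trace_exp {ι : Type*} [Fintype ι] [DecidableEq ι] (A : Matrix ι ι ℂ) :
    HasSum (fun k : ℕ => (k ! : ℂ)⁻¹ * Matrix.trace (A ^ k))
      (Matrix.trace (NormedSpace.exp A)) := by
  letI : SeminormedRing (Matrix ι ι ℂ) := Matrix.linftyOpSemiNormedRing
  letI : NormedRing (Matrix ι ι ℂ) := Matrix.linftyOpNormedRing
  letI : NormedAlgebra ℂ (Matrix ι ι ℂ) := Matrix.linftyOpNormedAlgebra
  have hsum : Summable fun k : ℕ => (k ! : ℂ)⁻¹ • A ^ k :=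
    NormedSpace.expSeries_summable' (𝕂 := ℂ) A
  have hexp : NormedSpace.exp A = ∑' k : ℕ, (k ! : ℂ)⁻¹ • A ^ k := by
    rw [NormedSpace.exp_eq_tsum (𝕂 := ℂ)]
  let T : Matrix ι ι ℂ →L[ℂ] ℂ :=
    LinearMap.toContinuousLinearMap (Matrix.traceLinearMap ι ℂ ℂ)
  have h := T.hasSum hsum.hasSum
  rw [← hexp] at h
  simpa [T, Matrix.trace_smul, smul_eq_mul] using h

lemma hasSum_exp_complex (z : ℂ) :
    HasSum (fun k : ℕ => (k ! : ℂ)⁻¹ * z ^ k) (Complex.exp z) := by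
  have hsum : Summable fun k : ℕ => (k ! : ℂ)⁻¹ • z ^ k :=
    NormedSpace.expSeries_summable' (𝕂 := ℂ) z
  have h := hsum.hasSum
  rw [← congrFun (NormedSpace.exp_eq_tsum (𝕂 := ℂ)) z, ← Complex.exp_eq_exp_ℂ] at h
  simpa [smul_eq_mul] using h

lemma trace_exp_two (A B v e₁ e₂ : ℂ) (hv : v ≠ 0) (hne : e₁ ≠ e₂)
    (hs : A + B = e₁ + e₂) (hp : A * B - v ^ 2 = e₁ * e₂) :
    Matrix.trace (NormedSpace.exp !![A, v; v, B]) =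
      Complex.exp e₁ + Complex.exp e₂ := by
  set P : Matrix (Fin 2) (Fin 2) ℂ := !![v, v; e₁ - A, e₂ - A] with hPdef
  have hdet : P.det = v * (e₂ - e₁) := by
    simp [hPdef, Matrix.det_fin_two_of]; ring
  have hdu : IsUnit P.det := by
    rw [hdet]
    exact (mul_ne_zero hv (sub_ne_zero.2 (Ne.symm hne))).isUnit
  have hP : IsUnit P := (Matrix.isUnit_iff_isUnit_det P).2 hdu
  have hMP : !![A, v; v, B] * P = P * Matrix.diagonal ![e₁, e₂] := by
    ext i j
    fin_cases i <;> fin_cases j <;>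
      simp [hPdef, Matrix.mul_apply, Fin.sum_univ_two, Matrix.diagonal]
    · ring
    · ring
    · linear_combination e₁ * hs - hp
    · linear_combination e₂ * hs - hp
  have key : !![A, v; v, B] = P * Matrix.diagonal ![e₁, e₂] * P⁻¹ := by
    rw [← hMP, Matrix.mul_assoc, Matrix.mul_nonsing_inv P hdu, Matrix.mul_one]
  rw [key, Matrix.exp_conj P _ hP, Matrix.trace_mul_cycle,
    Matrix.nonsing_inv_mul P hdu, Matrix.one_mul, Matrix.exp_diagonal,
    Matrix.trace_diagonal, Fin.sum_univ_two]
  have happ : ∀ x : Fin 2 → ℂ, ∀ i, (NormedSpace.exp x) i = NormedSpace.exp (x i) := by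
    intro x i
    exact (NormedSpace.map_exp (Pi.evalAlgHom ℂ (fun _ => ℂ) i) (continuous_apply i) x)
  simp [happ, Complex.exp_eq_exp_ℂ]

end DAauxSec

/-- Partition function of the degenerate DA Hamiltonian:
`Tr e^{−βH_S} = e^{−βe₁} + e^{−βe₂} + (N_D−1)e^{−βE_D} + (N_A−1)e^{−βE_A}`,
where `e₁, e₂` are the eigenvalues of `[[E_D,v],[v,E_A]]`, `v = V√(N_D N_A)`. -/
theorem stmt10 (N_D N_A : ℕ) (hND : 1 ≤ N_D) (hNA : 1 ≤ N_A)
    (E_D E_A V β : ℝ) (hV : V ≠ 0)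
    (H : Matrix (Fin N_D ⊕ Fin N_A) (Fin N_D ⊕ Fin N_A) ℂ)
    (hH : ∀ a b, H a b =
      match a, b with
      | Sum.inl j, Sum.inl j' => if j = j' then (E_D : ℂ) else 0
      | Sum.inr k, Sum.inr k' => if k = k' then (E_A : ℂ) else 0
      | _, _ => (V : ℂ))
    (v e₁ e₂ : ℝ) (hv : v = V * Real.sqrt ((N_D : ℝ) * N_A))
    (he₁ : e₁ = (E_D + E_A + Real.sqrt ((E_D - E_A) ^ 2 + 4 * v ^ 2)) / 2)
    (he₂ : e₂ = (E_D + E_A - Real.sqrt ((E_D - E_A) ^ 2 + 4 * v ^ 2)) / 2) :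
    Matrix.trace (NormedSpace.exp ((-β : ℂ) • H)) =
      ((Real.exp (-β * e₁) + Real.exp (-β * e₂)
        + ((N_D : ℝ) - 1) * Real.exp (-β * E_D)
        + ((N_A : ℝ) - 1) * Real.exp (-β * E_A) : ℝ) : ℂ) := by
  -- basic positivity facts
  have hmn_pos : (0:ℝ) < (N_D : ℝ) * N_A := by
    have h1 : (0:ℝ) < (N_D : ℝ) := by exact_mod_cast Nat.lt_of_lt_of_le Nat.zero_lt_one hND
    have h2 : (0:ℝ) < (N_A : ℝ) := by exact_mod_cast Nat.lt_of_lt_of_le Nat.zero_lt_one hNA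
    exact mul_pos h1 h2
  have hsq : Real.sqrt ((N_D : ℝ) * N_A) ≠ 0 := by
    exact ne_of_gt (Real.sqrt_pos.2 hmn_pos)
  have hvne : v ≠ 0 := by rw [hv]; exact mul_ne_zero hV hsq
  have hv2pos : (0:ℝ) < v ^ 2 :=
    lt_of_le_of_ne (sq_nonneg v) (Ne.symm (pow_ne_zero 2 hvne))
  have hdisc_pos : (0:ℝ) < (E_D - E_A) ^ 2 + 4 * v ^ 2 := by nlinarith [sq_nonneg (E_D - E_A)]
  have hs2 : Real.sqrt ((E_D - E_A) ^ 2 + 4 * v ^ 2) ^ 2 = (E_D - E_A) ^ 2 + 4 * v ^ 2 :=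
    Real.sq_sqrt (le_of_lt hdisc_pos)
  have hsqrt_pos : 0 < Real.sqrt ((E_D - E_A) ^ 2 + 4 * v ^ 2) := Real.sqrt_pos.2 hdisc_pos
  -- real eigenvalue identities
  have r1 : e₁ + e₂ = E_D + E_A := by rw [he₁, he₂]; ring
  have r2 : e₁ * e₂ = E_D * E_A - v ^ 2 := by
    rw [he₁, he₂]; linear_combination (-(1:ℝ)/4) * hs2
  have rne : e₁ ≠ e₂ := by
    rw [he₁, he₂]; intro h; nlinarith [hsqrt_pos]
  have r3 : v ^ 2 = V ^ 2 * ((N_D : ℝ) * N_A) := by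
    rw [hv, mul_pow, Real.sq_sqrt (le_of_lt hmn_pos)]
  -- complex data
  set w : ℂ := (Real.sqrt ((N_D : ℝ) * N_A) : ℂ) with hwdef
  have hw : w ^ 2 = (N_D : ℂ) * N_A := by
    rw [hwdef]
    rw [← Complex.ofReal_pow, Real.sq_sqrt (le_of_lt hmn_pos)]
    push_cast
    ring
  set aC : ℂ := (-β : ℂ) * E_D with haC
  set bC : ℂ := (-β : ℂ) * E_A with hbC
  set VC : ℂ := (-β : ℂ) * V with hVC
  -- the scaled Hamiltonian is a structured matrix
  have hA : (-β : ℂ) • H = Smat N_D N_A aC bC 0 VC VC 0 := by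
    ext x y
    rw [Matrix.smul_apply, hH x y]
    cases x <;> cases y <;>
      simp [Smat, haC, hbC, hVC, mul_ite, smul_eq_mul, mul_comm]
  set MC : Matrix (Fin 2) (Fin 2) ℂ := !![aC, VC*w; VC*w, bC] with hMC
  -- trace of exp via power series
  have htr : ∀ k : ℕ, Matrix.trace (((-β : ℂ) • H) ^ k) =
      Matrix.trace (MC ^ k) + ((N_D:ℂ)-1)*aC^k + ((N_A:ℂ)-1)*bC^k := by
    intro k
    rw [hA, hMC]
    exact Smat_trace_pow N_D N_A aC bC VC w hw k
  have h1 := hasSum_trace_exp MC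
  have h2 := hasSum_exp_complex aC
  have h3 := hasSum_exp_complex bC
  have hTot := h1.add (((h2.mul_left ((N_D:ℂ)-1))).add (h3.mul_left ((N_A:ℂ)-1)))
  have hfun : (fun k : ℕ => (k ! : ℂ)⁻¹ * Matrix.trace (MC ^ k) +
      (((N_D:ℂ)-1) * ((k ! : ℂ)⁻¹ * aC ^ k) + ((N_A:ℂ)-1) * ((k ! : ℂ)⁻¹ * bC ^ k))) =
      fun k : ℕ => (k ! : ℂ)⁻¹ * Matrix.trace (((-β : ℂ) • H) ^ k) := by
    funext k
    rw [htr k]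
    ring
  rw [hfun] at hTot
  have hLHS : Matrix.trace (NormedSpace.exp ((-β : ℂ) • H)) =
      Matrix.trace (NormedSpace.exp MC) +
        (((N_D:ℂ)-1) * Complex.exp aC + ((N_A:ℂ)-1) * Complex.exp bC) :=
    (hasSum_trace_exp ((-β : ℂ) • H)).unique hTot
  -- compute the 2×2 trace
  have hc1 : (e₁:ℂ) + e₂ = (E_D:ℂ) + E_A := by exact_mod_cast r1
  have hc2 : (e₁:ℂ) * e₂ = (E_D:ℂ) * E_A - (v:ℂ)^2 := by exact_mod_cast r2
  have hc3 : (v:ℂ)^2 = (V:ℂ)^2 * ((N_D:ℂ) * N_A) := by exact_mod_cast r3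
  have hM2 : Matrix.trace (NormedSpace.exp MC) =
      Complex.exp ((-β : ℂ) * e₁) + Complex.exp ((-β : ℂ) * e₂) := by
    rcases eq_or_ne β 0 with hb | hb
    · subst hb
      have : MC = !![(0:ℂ), 0; 0, 0] := by
        rw [hMC, haC, hbC, hVC]; norm_num
      rw [this]
      have hzero : !![(0:ℂ), 0; 0, 0] = (0 : Matrix (Fin 2) (Fin 2) ℂ) := by
        ext i j; fin_cases i <;> fin_cases j <;> simp
      rw [hzero, NormedSpace.exp_zero, Matrix.trace_one]
      norm_num
    · have hbC' : (-β : ℂ) ≠ 0 := by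
        simpa using (Complex.ofReal_ne_zero.2 hb)
      have hwne : w ≠ 0 := by
        rw [hwdef]; exact_mod_cast Complex.ofReal_ne_zero.2 hsq
      have hVCw : VC * w ≠ 0 := by
        exact mul_ne_zero (mul_ne_zero hbC' (Complex.ofReal_ne_zero.2 hV)) hwne
      have hEne : (-β : ℂ) * e₁ ≠ (-β : ℂ) * e₂ := by
        intro h
        exact rne (by exact_mod_cast mul_left_cancel₀ hbC' h)
      refine trace_exp_two aC bC (VC*w) ((-β : ℂ)*e₁) ((-β : ℂ)*e₂) hVCw hEne ?_ ?_
      · rw [haC, hbC]; linear_combination ((β : ℂ)) * hc1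
      · rw [haC, hbC, hVC]
        linear_combination (-(β:ℂ)^2) * hc2 + ((β:ℂ)^2) * hc3 -
          ((β:ℂ)^2 * (V:ℂ)^2) * hw
  rw [hLHS, hM2]
  push_cast [Complex.ofReal_exp]
  ring
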